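/- Let A_0, A_1, …, A_d be complex m×m matrices, let U = X_0 A_0 + ⋯ + X_d A_d, suppose P = det U ∈ ℂ[X_0,…,X_d] is a nonzero squarefree polynomial, and let V = adj U. Fix X⁰ ∈ ℂ^{d+1} and let P'_{X⁰} = Σ_{α=0}^{d} X⁰_α · ∂P/∂X_α be the directional derivative of P in the direction X⁰. Then for all indices i, j, the polynomial Σ_{k,l=1}^{m} V_{ik} · (U(X⁰))_{kl} · V_{lj} − V_{ij} · P'_{X⁰} is divisible by P; equivalently, G_i U(X⁰) F_j = V_{ij} P'_{X⁰} at every point X ∈ ℂ^{d+1} with P(X) = 0, where G_i is the i-th row and F_j the j-th column of V and U(X⁰) = X⁰_0 A_0 + ⋯ + X⁰_d A_d. -/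

import Mathlib

open MvPolynomial Matrix

section Helpers

variable {R A : Type*} [CommRing R] [CommRing A] [Algebra R A]

/-- Product rule for a derivation over a finite product. -/
theorem myDerivProd (D : Derivation R A A) {ι : Type*} [DecidableEq ι]
    (s : Finset ι) (f : ι → A) :
    D (∏ i ∈ s, f i) = ∑ i ∈ s, (∏ j ∈ s.erase i, f j) * D (f i) := by
  induction s using Finset.induction_on with
  | empty => simp
  | @insert a s ha ih =>
    rw [Finset.prod_insert ha, Derivation.leibniz, smul_eq_mul, smul_eq_mul, ih,
      Finset.sum_insert ha, Finset.erase_insert ha, Finset.mul_sum, add_comm]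
    congr 1
    refine Finset.sum_congr rfl fun i hi => ?_
    rw [Finset.erase_insert_of_ne (by rintro rfl; exact ha hi),
      Finset.prod_insert (fun h => ha (Finset.mem_of_mem_erase h))]
    ring

/-- Derivation of a determinant. -/
theorem deriv_det {n : Type*} [DecidableEq n] [Fintype n]
    (D : Derivation R A A) (M : Matrix n n A) :
    D M.det = ∑ p, (M.updateCol p fun r => D (M r p)).det := by
  rw [Matrix.det_apply', map_sum]
  simp only [Matrix.det_apply']
  rw [Finset.sum_comm]
  refine Finset.sum_congr rfl fun σ _ => ?_
  rw [Derivation.leibniz, Derivation.map_intCast, smul_zero, add_zero, smul_eq_mul,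
    myDerivProd, Finset.mul_sum]
  refine Finset.sum_congr rfl fun p _ => ?_
  rw [← Finset.mul_prod_erase Finset.univ _ (Finset.mem_univ p), Matrix.updateCol_self]
  rw [Finset.prod_congr rfl (fun i hi =>
    Matrix.updateCol_ne (Finset.ne_of_mem_erase hi))]
  ring

variable {F : Type*} [Field F]

/-- Columns of the adjugate of a singular matrix are proportional. -/
theorem adj_col_prop {n : Type*} [DecidableEq n] [Fintype n]
    (B : Matrix n n F) (hB : B.det = 0) {p q : n} (hpq : B.adjugate p q ≠ 0) :
    ∃ w : n → F, ∀ k l, B.adjugate k l = B.adjugate p l * w k := by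
  classical
  set M' := B.updateRow q (Pi.single p 1) with hM'
  have hdet : M'.det = B.adjugate p q := (Matrix.adjugate_apply B p q).symm
  have hunit : IsUnit M'.det := by rw [hdet]; exact Ne.isUnit hpq
  refine ⟨M'⁻¹ *ᵥ Pi.single q 1, fun k l => ?_⟩
  have hker : B *ᵥ (fun r => B.adjugate r l) = 0 := by
    have h := Matrix.mul_adjugate B
    rw [hB, zero_smul] at h
    funext r
    have := congrFun (congrFun h r) l
    simpa [Matrix.mul_apply, Matrix.mulVec, dotProduct] using this
  have h1 : M' *ᵥ (fun r => B.adjugate r l) = B.adjugate p l • (Pi.single q 1 : n → F) := by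
    funext r
    rcases eq_or_ne r q with rfl | hr
    · simp [Matrix.mulVec, hM', Matrix.updateRow_self, single_dotProduct]
    · have : (M' *ᵥ fun r => B.adjugate r l) r = (B *ᵥ fun r => B.adjugate r l) r := by
        simp [Matrix.mulVec, hM', Matrix.updateRow_ne hr]
      rw [this, hker]
      simp [Pi.single_eq_of_ne hr]
  have h2 : (fun r => B.adjugate r l) = B.adjugate p l • (M'⁻¹ *ᵥ Pi.single q 1) := by
    have := congrArg (fun v => M'⁻¹ *ᵥ v) h1
    simpa [Matrix.mulVec_mulVec, Matrix.nonsing_inv_mul M' hunit, Matrix.one_mulVec,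
      Matrix.mulVec_smul] using this
  have := congrFun h2 k
  simpa [smul_eq_mul] using this

/-- Key pointwise identity for singular matrices over a field. -/
theorem adj_quadratic {n : Type*} [DecidableEq n] [Fintype n]
    (B M : Matrix n n F) (hB : B.det = 0) (i j : n) :
    ∑ k, ∑ l, B.adjugate i k * M k l * B.adjugate l j
      = B.adjugate i j * ∑ k, ∑ l, M k l * B.adjugate l k := by
  classical
  by_cases hN : B.adjugate = 0
  · simp [hN]
  · have : ∃ p q, B.adjugate p q ≠ 0 := by
      by_contra h
      push_neg at h
      exact hN (by ext p q; exact h p q)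
    obtain ⟨p, q, hpq⟩ := this
    obtain ⟨w, hw⟩ := adj_col_prop B hB hpq
    have hBt : Bᵀ.det = 0 := by rw [Matrix.det_transpose]; exact hB
    have hpq' : Bᵀ.adjugate q p ≠ 0 := by
      rw [← Matrix.adjugate_transpose]; exact hpq
    obtain ⟨w', hw'⟩ := adj_col_prop Bᵀ hBt hpq'
    have hrow : ∀ k l, B.adjugate l k = B.adjugate l q * w' k := by
      intro k l
      have h1 := hw' k l
      rw [← Matrix.adjugate_transpose] at h1
      simpa [Matrix.transpose_apply] using h1
    have key : ∀ k l, B.adjugate k l = B.adjugate p q * w' l * w k := by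
      intro k l
      rw [hw k l, hrow l p]
    rw [Finset.mul_sum]
    refine Finset.sum_congr rfl fun k _ => ?_
    rw [Finset.mul_sum]
    refine Finset.sum_congr rfl fun l _ => ?_
    rw [key i k, key l j, key i j, key l k]
    ring

end Helpers

open MvPolynomial in
/-- For `U = X_0 A_0 + ⋯ + X_d A_d` with `P = det U` nonzero squarefree,
`V = adj U`, and a direction `X⁰ ∈ ℂ^{d+1}` with directional derivative
`P'_{X⁰} = Σ_α X⁰_α ∂P/∂X_α`, the polynomial
`Σ_{k,l} V_{ik} (U(X⁰))_{kl} V_{lj} − V_{ij} P'_{X⁰}` is divisible by `P`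
for all `i, j`. -/
theorem stmt16 {d m : ℕ} (A : Fin (d + 1) → Matrix (Fin m) (Fin m) ℂ)
    (U : Matrix (Fin m) (Fin m) (MvPolynomial (Fin (d + 1)) ℂ))
    (hU : U = Matrix.of fun k l => ∑ β, X β * C (A β k l))
    (hP0 : U.det ≠ 0) (hPsf : Squarefree U.det)
    (X0 : Fin (d + 1) → ℂ) (i j : Fin m) :
    U.det ∣
      ((∑ k, ∑ l, U.adjugate i k * C ((∑ α, X0 α • A α) k l) * U.adjugate l j) -
        U.adjugate i j * ∑ α, C (X0 α) * MvPolynomial.pderiv α U.det) := by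
  classical
  set B0 : Matrix (Fin m) (Fin m) ℂ := ∑ α, X0 α • A α with hB0def
  set Dd : Derivation ℂ (MvPolynomial (Fin (d + 1)) ℂ) (MvPolynomial (Fin (d + 1)) ℂ) := ∑ α, X0 α • pderiv α with hDd
  have hDfun : ∀ f : MvPolynomial (Fin (d + 1)) ℂ, Dd f = ∑ α, C (X0 α) * pderiv α f := by
    intro f
    have h1 : ⇑(∑ α, X0 α • pderiv α (R := ℂ) (σ := Fin (d + 1)))
        = ∑ α : Fin (d + 1), ⇑(X0 α • pderiv α (R := ℂ) (σ := Fin (d + 1))) :=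
      map_sum (Derivation.coeFnAddMonoidHom) _ _
    rw [hDd]
    rw [show (⇑(∑ α, X0 α • pderiv α (R := ℂ) (σ := Fin (d + 1)))) f
        = (∑ α : Fin (d + 1), ⇑(X0 α • pderiv α (R := ℂ) (σ := Fin (d + 1)))) f from
      congrFun h1 f]
    rw [Finset.sum_apply]
    refine Finset.sum_congr rfl fun α _ => ?_
    rw [Derivation.smul_apply, smul_eq_C_mul]
  have hDU : ∀ r p : Fin m, Dd (U r p) = C (B0 r p) := by
    intro r p
    rw [hU]
    simp only [Matrix.of_apply]
    rw [map_sum]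
    have h2 : ∀ β, Dd (X β * C (A β r p)) = C (X0 β * A β r p) := by
      intro β
      rw [hDfun]
      have h3 : ∀ α, pderiv α ((X β : MvPolynomial (Fin (d + 1)) ℂ) * C (A β r p))
          = if β = α then C (A β r p) else 0 := by
        intro α
        rw [pderiv_mul, pderiv_C, mul_zero, add_zero, pderiv_X, Pi.single_apply]
        split <;> simp_all
      simp only [h3]
      rw [Finset.sum_eq_single β]
      · simp [_root_.map_mul]
      · intro b _ hb
        simp [Ne.symm hb]
      · simp
    rw [Finset.sum_congr rfl fun β _ => h2 β]
    rw [hB0def]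
    simp [Matrix.sum_apply, map_sum]
  -- Step 1: the directional derivative equals a trace-type expression
  have step1 : (∑ α, C (X0 α) * pderiv α U.det)
      = ∑ k, ∑ l, C (B0 k l) * U.adjugate l k := by
    rw [← hDfun, deriv_det]
    have hc : ∀ p, (U.updateCol p fun r => Dd (U r p)).det
        = ∑ r, U.adjugate p r * C (B0 r p) := by
      intro p
      have hfun : (fun r => Dd (U r p)) = fun r => C (B0 r p) :=
        funext fun r => hDU r p
      rw [hfun, ← Matrix.cramer_apply, Matrix.cramer_eq_adjugate_mulVec]
      simp [Matrix.mulVec, dotProduct]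
    rw [Finset.sum_congr rfl fun p _ => hc p, Finset.sum_comm]
    refine Finset.sum_congr rfl fun k _ => Finset.sum_congr rfl fun l _ => mul_comm _ _
  rw [step1]
  set E : MvPolynomial (Fin (d + 1)) ℂ := (∑ k, ∑ l, U.adjugate i k * C (B0 k l) * U.adjugate l j) -
      U.adjugate i j * ∑ k, ∑ l, C (B0 k l) * U.adjugate l k with hE
  -- Step 2: E vanishes on the zero locus of det U
  have hvan : ∀ x : Fin (d + 1) → ℂ, eval x U.det = 0 → eval x E = 0 := by
    intro x hx
    set Bx : Matrix (Fin m) (Fin m) ℂ := U.map (eval x) with hBx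
    have hdetBx : Bx.det = 0 := by
      rw [hBx, ← RingHom.mapMatrix_apply, ← RingHom.map_det]
      exact hx
    have hadj : ∀ a b : Fin m, eval x (U.adjugate a b) = Bx.adjugate a b := by
      intro a b
      have := (eval x : MvPolynomial (Fin (d + 1)) ℂ →+* ℂ).map_adjugate U
      rw [hBx, ← RingHom.mapMatrix_apply, ← this]
      simp [RingHom.mapMatrix_apply, Matrix.map_apply]
    rw [hE]
    simp only [map_sub, map_sum, _root_.map_mul, eval_C, hadj]
    rw [adj_quadratic Bx B0 hdetBx i j]
    ring
  -- Nullstellensatz + squarefree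
  have hrad : E ∈ (Ideal.span {U.det}).radical := by
    rw [← MvPolynomial.vanishingIdeal_zeroLocus_eq_radical (K := ℂ)]
    rw [MvPolynomial.mem_vanishingIdeal_iff]
    intro x hx
    refine hvan x ?_
    exact (MvPolynomial.mem_zeroLocus_iff.mp hx) U.det (Ideal.subset_span rfl)
  rw [Ideal.mem_radical_iff] at hrad
  obtain ⟨n, hn⟩ := hrad
  rw [Ideal.mem_span_singleton] at hn
  exact hPsf.isRadical n E hn
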